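/- Let X be a finitely generated free ℤ-module of rank m ≥ 1 with a nondegenerate bilinear form (−,=), and let G be the Gram matrix of the form with respect to some ℤ-basis. Let (x_1,…,x_m) and (y_1,…,y_m) be tuples of elements of X such that: (i) (x_i,y_i) ≠ 0 for all i; (ii) (x_i,y_j) = 0 whenever i > j; (iii) (x_i,y_i) divides (x_i,y_j) whenever i < j; (iv) (x_i,y_i) divides (x_{i+1},y_{i+1}) for i ∈ [1,m−1]; (v) ∏_{i∈[1,m]} (x_i,y_i) = ±det G. Then (x_1,…,x_m) and (y_1,…,y_m) are ℤ-bases of X, and the elementary divisors of G are ((x_1,y_1), (x_2,y_2), …, (x_m,y_m)). -/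

import Mathlib

/-- `d` is a tuple of elementary divisors of the square integer matrix `G` (Smith
normal form): each entry divides the next, and `d` is obtained from `G` by unimodular
row and column operations. -/
def IsElementaryDivisorTuple {m : ℕ} (G : Matrix (Fin m) (Fin m) ℤ) (d : Fin m → ℤ) : Prop :=
  (∀ i j : Fin m, i ≤ j → d i ∣ d j) ∧
    ∃ P Q : Matrix (Fin m) (Fin m) ℤ, IsUnit P.det ∧ IsUnit Q.det ∧
      P * G * Q = Matrix.diagonal d

/-- **A linear algebra lemma.** Let `X` be free of rank `m ≥ 1` over `ℤ` with a
nondegenerate bilinear form whose Gram matrix w.r.t. some basis is `G`. If tuples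
`(x_i)`, `(y_i)` satisfy (i) `(x_i,y_i) ≠ 0`; (ii) `(x_i,y_j) = 0` for `i > j`;
(iii) `(x_i,y_i) ∣ (x_i,y_j)` for `i < j`; (iv) `(x_i,y_i) ∣ (x_{i+1},y_{i+1})`;
(v) `∏ (x_i,y_i) = ± det G`; then both tuples are `ℤ`-bases of `X` and the
elementary divisors of `G` are given by the tuple `((x_1,y_1),…,(x_m,y_m))`. -/
theorem bases_of_triangular_form (m : ℕ) (hm : 1 ≤ m)
    (X : Type) [AddCommGroup X] [Module ℤ X]
    (B : X →ₗ[ℤ] X →ₗ[ℤ] ℤ)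
    (bas : Module.Basis (Fin m) ℤ X)
    (hG : (Matrix.of fun i j => B (bas i) (bas j)).det ≠ 0)
    (x y : Fin m → X)
    (h1 : ∀ i : Fin m, B (x i) (y i) ≠ 0)
    (h2 : ∀ i j : Fin m, j < i → B (x i) (y j) = 0)
    (h3 : ∀ i j : Fin m, i < j → B (x i) (y i) ∣ B (x i) (y j))
    (h4 : ∀ i j : Fin m, (i : ℕ) + 1 = (j : ℕ) → B (x i) (y i) ∣ B (x j) (y j))
    (h5 : (∏ i : Fin m, B (x i) (y i)) = (Matrix.of fun i j => B (bas i) (bas j)).det ∨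
          (∏ i : Fin m, B (x i) (y i)) = -(Matrix.of fun i j => B (bas i) (bas j)).det) :
    (LinearIndependent ℤ x ∧ Submodule.span ℤ (Set.range x) = ⊤) ∧
    (LinearIndependent ℤ y ∧ Submodule.span ℤ (Set.range y) = ⊤) ∧
    IsElementaryDivisorTuple (Matrix.of fun i j => B (bas i) (bas j))
      (fun i => B (x i) (y i)) := by
  set G : Matrix (Fin m) (Fin m) ℤ := Matrix.of fun i j => B (bas i) (bas j) with hGdef
  set d : Fin m → ℤ := fun i => B (x i) (y i) with hd
  set M : Matrix (Fin m) (Fin m) ℤ := Matrix.of fun i j => B (x i) (y j) with hMdef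
  -- expansion of B in coordinates
  have hrepr : ∀ v w : X, B v w =
      ∑ k, ∑ l, B (bas k) (bas l) * (bas.repr v k * bas.repr w l) := by
    intro v w
    conv_lhs => rw [← bas.sum_repr v, ← bas.sum_repr w]
    simp [Finset.mul_sum, mul_comm, mul_left_comm, -Module.Basis.sum_repr]
    rw [Finset.sum_comm]
  -- factorization M = Aᵀ G C
  have hfact : M = (bas.toMatrix x).transpose * G * (bas.toMatrix y) := by
    ext i j
    simp only [Matrix.mul_apply, Matrix.transpose_apply, Module.Basis.toMatrix_apply,
      hMdef, Matrix.of_apply]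
    rw [hrepr (x i) (y j), Finset.sum_comm]
    apply Finset.sum_congr rfl
    intro l _
    rw [Finset.sum_mul]
    apply Finset.sum_congr rfl
    intro k _
    rw [hGdef]
    simp only [Matrix.of_apply]
    ring
  -- M is upper triangular
  have htri : M.BlockTriangular id := fun i j h => h2 i j h
  have hdetM : M.det = ∏ i, d i := by
    rw [Matrix.det_of_upperTriangular htri]
    rfl
  have hdetfact : M.det = (bas.toMatrix x).det * G.det * (bas.toMatrix y).det := by
    rw [hfact, Matrix.det_mul, Matrix.det_mul, Matrix.det_transpose]
  set a := (bas.toMatrix x).det with ha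
  set c := (bas.toMatrix y).det with hc
  have hac : a * c = 1 ∨ a * c = -1 := by
    rcases h5 with h5 | h5
    · left
      have : a * c * G.det = 1 * G.det := by
        rw [one_mul]; nlinarith [hdetfact, hdetM, h5]
      exact mul_right_cancel₀ hG this
    · right
      have : a * c * G.det = -1 * G.det := by
        rw [neg_one_mul]; nlinarith [hdetfact, hdetM, h5]
      exact mul_right_cancel₀ hG this
  have hacu : IsUnit (a * c) := by
    rcases hac with h | h <;> rw [h] <;> exact Int.isUnit_iff.mpr (by tauto)
  have hau : IsUnit a := isUnit_of_mul_isUnit_left hacu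
  have hcu : IsUnit c := isUnit_of_mul_isUnit_right hacu
  have hxbasis : LinearIndependent ℤ x ∧ Submodule.span ℤ (Set.range x) = ⊤ :=
    (Module.Basis.is_basis_iff_det bas).mpr (by rw [Module.Basis.det_apply]; exact hau)
  have hybasis : LinearIndependent ℤ y ∧ Submodule.span ℤ (Set.range y) = ⊤ :=
    (Module.Basis.is_basis_iff_det bas).mpr (by rw [Module.Basis.det_apply]; exact hcu)
  refine ⟨hxbasis, hybasis, ?_, ?_⟩
  · -- divisibility chain
    have hchain : ∀ n : ℕ, ∀ i j : Fin m, (i : ℕ) + n = (j : ℕ) → d i ∣ d j := by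
      intro n
      induction n with
      | zero => intro i j h; have : i = j := Fin.ext (by omega); rw [this]
      | succ n ih =>
        intro i j h
        have hlt : (i : ℕ) + n < m := by omega
        exact (ih i ⟨(i : ℕ) + n, hlt⟩ rfl).trans (h4 ⟨(i : ℕ) + n, hlt⟩ j (by omega))
    intro i j hij
    exact hchain ((j : ℕ) - (i : ℕ)) i j (by omega)
  · -- Smith normal form
    set U : Matrix (Fin m) (Fin m) ℤ :=
      Matrix.of fun i j => if i < j then M i j / d i else if i = j then 1 else 0 with hU
    have hDU : Matrix.diagonal d * U = M := by
      ext i j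
      rw [Matrix.diagonal_mul]
      rcases lt_trichotomy i j with hij | hij | hij
      · simp only [hU, Matrix.of_apply, if_pos hij]
        exact Int.mul_ediv_cancel' (h3 i j hij)
      · rw [hij]
        show d j * (if j < j then M j j / d j else if j = j then 1 else 0) = M j j
        rw [if_neg (lt_irrefl j), if_pos rfl, mul_one]
        rfl
      · simp only [hU, Matrix.of_apply, if_neg (asymm hij), if_neg (ne_of_gt hij)]
        rw [mul_zero]
        exact (h2 i j hij).symm
    have hUtri : U.BlockTriangular id := by
      intro i j hij
      have h1' : ¬ i < j := asymm hij
      have h2' : i ≠ j := ne_of_gt hij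
      show (if i < j then M i j / d i else if i = j then 1 else 0) = 0
      rw [if_neg h1', if_neg h2']
    have hUdet : U.det = 1 := by
      rw [Matrix.det_of_upperTriangular hUtri]
      refine Finset.prod_eq_one fun i _ => ?_
      show (if i < i then M i i / d i else if i = i then 1 else 0) = 1
      rw [if_neg (lt_irrefl i), if_pos rfl]
    haveI : Invertible U := U.invertibleOfIsUnitDet (by simp [hUdet])
    refine ⟨(bas.toMatrix x).transpose, bas.toMatrix y * ⅟U, by rwa [Matrix.det_transpose], ?_, ?_⟩
    · rw [Matrix.det_mul]
      exact hcu.mul (IsUnit.of_mul_eq_one U.det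
        (by rw [← Matrix.det_mul, invOf_mul_self, Matrix.det_one]))
    · rw [← Matrix.mul_assoc, ← hfact, ← hDU, Matrix.mul_assoc, mul_invOf_self, Matrix.mul_one]
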